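/- Let q ≥ 2, n ≥ 4 and 2 ≤ k ≤ n−2. Then S_{k,q}(n) is a cross-bifix-free set on BF_q(n): every word of S_{k,q}(n) is bifix-free, and for any two distinct words w, w' ∈ S_{k,q}(n), no nonempty proper prefix of w is a suffix of w' and no nonempty proper prefix of w' is a suffix of w. -/
import Mathlib


/-- Value of a letter: 1 ↦ +1, 0 ↦ -1, other letters ↦ 0. -/
def mval (a : ℕ) : ℤ := if a = 1 then 1 else if a = 0 then -1 else 0

/-- Value-sum of a word. -/
def vsum (w : List ℕ) : ℤ := (w.map mval).sum

/-- A (q-2)-colored Motzkin word over the alphabet Z_q = {0,...,q-1}: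
all letters < q, every prefix has nonnegative value-sum, total value-sum 0. -/
def IsMotzkinWord (q : ℕ) (w : List ℕ) : Prop :=
  (∀ a ∈ w, a < q) ∧ (∀ u, u <+: w → 0 ≤ vsum u) ∧ vsum w = 0

/-- The set 𝓜_{q-2}(n) of (q-2)-colored Motzkin words of length n. -/
def MotzkinSet (q n : ℕ) : Set (List ℕ) := {w | w.length = n ∧ IsMotzkinWord q w}

/-- M_{q-2}(n), the number of (q-2)-colored Motzkin words of length n. -/
noncomputable def Mnum (q n : ℕ) : ℕ := (MotzkinSet q n).ncard

/-- The set Ê_{q-2}(n) of elevated (q-2)-colored Motzkin words of length n: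
words 1α0 with α ∈ 𝓜_{q-2}(n-2). -/
def ElevatedSet (q n : ℕ) : Set (List ℕ) :=
  {w | w.length = n ∧ ∃ α ∈ MotzkinSet q (n - 2), w = 1 :: (α ++ [0])}

/-- The set A_q(n). -/
def SetA (q n : ℕ) : Set (List ℕ) :=
  {w | ∃ i ≤ n / 2, ∃ α ∈ MotzkinSet q i, ∃ β ∈ ElevatedSet q (n - i), w = α ++ β} \
    {w | ∃ α ∈ ElevatedSet q (n / 2), ∃ β ∈ ElevatedSet q (n / 2), w = α ++ β}

/-- The set B_q(n). -/
def SetB (q n : ℕ) : Set (List ℕ) :=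
  {w | ∃ i ≤ n / 2 - 1, ∃ α ∈ MotzkinSet q i, ∃ β ∈ ElevatedSet q (n - i - 1),
    w = 1 :: (α ++ β)}

/-- The set C_q(n): words γ0 with γ a (q-2)-colored Motzkin word of length n-1
having no factor which is an elevated Motzkin word of length j ≥ ⌈n/2⌉. -/
def SetC (q n : ℕ) : Set (List ℕ) :=
  {w | ∃ γ ∈ MotzkinSet q (n - 1),
    (∀ j, (n + 1) / 2 ≤ j → ∀ β ∈ ElevatedSet q j, ¬ β <:+: γ) ∧ w = γ ++ [0]}

/-- The cross-bifix-free candidate set CBFS_q(n). -/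
def CBFS (q n : ℕ) : Set (List ℕ) := SetA q n ∪ SetB q n ∪ SetC q n

/-- A word is bifix-free if no nonempty proper prefix of it is also a suffix of it. -/
def BifixFree (w : List ℕ) : Prop :=
  ∀ u, u <+: w → u ≠ [] → u.length < w.length → ¬ u <:+ w

/-- BF_q(n): the set of bifix-free words of length n over Z_q. -/
def BF (q n : ℕ) : Set (List ℕ) := {w | w.length = n ∧ (∀ a ∈ w, a < q) ∧ BifixFree w}

/-- F_{k,q}(n): the number of words of length n over Z_q avoiding k consecutive 0's. -/
noncomputable def Fcount (k q n : ℕ) : ℕ :=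
  {w : List ℕ | w.length = n ∧ (∀ a ∈ w, a < q) ∧ ¬ List.replicate k 0 <:+: w}.ncard

/-- The set S_{k,q}(n) of Bajic--Stojanovic--Chee--Kiah type words: words s of length n
over Z_q with s₁ = ⋯ = s_k = 0, s_{k+1} ≠ 0, s_n ≠ 0, and such that the subword
s_{k+2} ⋯ s_{n-1} contains no k consecutive 0's. -/
def SetS (q k n : ℕ) : Set (List ℕ) :=
  {s | s.length = n ∧ (∀ a ∈ s, a < q) ∧ s.take k = List.replicate k 0 ∧
    s.getD k 0 ≠ 0 ∧ s.getLast? ≠ some 0 ∧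
    ¬ List.replicate k 0 <:+: (s.drop (k + 1)).take (n - k - 2)}

lemma setS_key (q n k : ℕ) (hk : 2 ≤ k) (w w' : List ℕ)
    (hw : w ∈ SetS q k n) (hw' : w' ∈ SetS q k n) :
    ∀ u, u <+: w → u ≠ [] → u.length < w.length → ¬ u <:+ w' := by
  obtain ⟨hwl, -, hwtake, -, -, -⟩ := hw
  obtain ⟨hwl', -, -, hget', hlast', hmid'⟩ := hw'
  intro u hpre hne hlen hsuf
  obtain ⟨v, hv⟩ := hsuf
  have hul : u.length < n := hwl ▸ hlen
  have hvl : v.length + u.length = n := by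
    have := congrArg List.length hv
    simpa [hwl'] using this
  have hv1 : 1 ≤ v.length := by omega
  have hueq : u = w.take u.length := List.prefix_iff_eq_take.mp hpre
  by_cases hku : u.length ≤ k
  · -- u = replicate u.length 0, but w' ends nonzero
    have hu0 : u = List.replicate u.length 0 := by
      rw [hueq, show List.take u.length w = List.take u.length (List.take k w) from
        by rw [List.take_take, min_eq_left hku], hwtake, List.take_replicate]
      simp [min_eq_left hku]
    apply hlast'
    rw [← hv, List.getLast?_append, hu0, List.getLast?_replicate]
    have : u.length ≠ 0 := by simpa using (List.length_pos_iff.mpr hne).ne'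
    simp [this]
  · push_neg at hku
    have hutake : u.take k = List.replicate k 0 := by
      rw [hueq, List.take_take, min_eq_left hku.le, hwtake]
    have hu : u = List.replicate k 0 ++ u.drop k := by
      rw [← hutake, List.take_append_drop]
    set t := u.drop k with ht
    have htl : t.length = u.length - k := by simp [ht]
    by_cases hvk : v.length ≤ k
    · -- w'.getD k 0 = 0
      apply hget'
      rw [List.getD_eq_getElem?_getD, ← hv, List.getElem?_append_right hvk, hu,
        List.getElem?_append_left (by simp; omega), List.getElem?_replicate]
      have : k - v.length < k := by omega
      simp [this]
    · push_neg at hvk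
      apply hmid'
      -- v = v.take (k+1) ++ v.drop (k+1), |v.take (k+1)| = k+1
      have hdrop : w'.drop (k+1) = v.drop (k+1) ++ (List.replicate k 0 ++ t) := by
        rw [← hv, hu, List.drop_append_of_le_length (by omega)]
      have hA : (v.drop (k+1) ++ List.replicate k 0).length = v.length - 1 := by
        simp; omega
      have htake : (w'.drop (k+1)).take (n - k - 2)
          = (v.drop (k+1) ++ List.replicate k 0) ++ t.take (n - k - 2 - (v.length - 1)) := by
        rw [hdrop, ← List.append_assoc, List.take_append, hA,
          List.take_of_length_le (by simp; omega)]
      rw [htake]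
      exact ⟨v.drop (k+1), t.take (n - k - 2 - (v.length - 1)), by simp [List.append_assoc]⟩

/-- S_{k,q}(n) is a cross-bifix-free set on BF_q(n): every word of
S_{k,q}(n) is bifix-free, and for any two distinct words w, w' ∈ S_{k,q}(n), no nonempty
proper prefix of w is a suffix of w' and no nonempty proper prefix of w' is a suffix
of w. -/
theorem setS_cross_bifix_free (q n k : ℕ) (hq : 2 ≤ q) (hn : 4 ≤ n) (hk : 2 ≤ k)
    (hkn : k ≤ n - 2) :
    SetS q k n ⊆ BF q n ∧
    ∀ w ∈ SetS q k n, ∀ w' ∈ SetS q k n, w ≠ w' →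
      (∀ u, u <+: w → u ≠ [] → u.length < w.length → ¬ u <:+ w') ∧
      (∀ u, u <+: w' → u ≠ [] → u.length < w'.length → ¬ u <:+ w) := by
  refine ⟨fun w hw => ⟨hw.1, hw.2.1, fun u h1 h2 h3 => setS_key q n k hk w w hw hw u h1 h2 h3⟩,
    fun w hw w' hw' _ => ⟨setS_key q n k hk w w' hw hw', setS_key q n k hk w' w hw' hw⟩⟩
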